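/- For every odd integer k ≥ 5, the Möbius ladder M_k with k rungs is not cycle-conformal: M_k contains an even cycle C such that M_k - V(C) has no perfect matching. -/

import Mathlib

open SimpleGraph

/-- A graph has a perfect matching. -/
def hasPM {V : Type*} (G : SimpleGraph V) : Prop :=
  ∃ M : G.Subgraph, M.IsPerfectMatching

/-- The graph obtained from `G` by deleting the vertices in `s`. -/
def delVerts {V : Type*} (G : SimpleGraph V) (s : Set V) : SimpleGraph ↥(sᶜ) :=
  G.induce sᶜ

/-- A graph is cycle-conformal if it has a perfect matching and deleting the
vertex set of any even cycle leaves a graph with a perfect matching. -/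
def cycleConformal {V : Type*} (G : SimpleGraph V) : Prop :=
  hasPM G ∧ ∀ (v : V) (c : G.Walk v v), c.IsCycle → Even c.length →
    hasPM (delVerts G {x | x ∈ c.support})

/-- The ladder `L_k`: vertices `u i = Sum.inl i` and `v i = Sum.inr i` for
`i : Fin k`, with edges `uᵢuᵢ₊₁`, `vᵢvᵢ₊₁` and rungs `uᵢvᵢ`. -/
def ladder (k : ℕ) : SimpleGraph (Fin k ⊕ Fin k) :=
  SimpleGraph.fromRel (fun a b =>
    (∃ i j : Fin k, (i : ℕ) + 1 = (j : ℕ) ∧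
      ((a = Sum.inl i ∧ b = Sum.inl j) ∨ (a = Sum.inr i ∧ b = Sum.inr j))) ∨
    (∃ i : Fin k, a = Sum.inl i ∧ b = Sum.inr i))

/-- The Möbius ladder `M_k`: the ladder `L_k` together with the two extra
edges `u₁v_k` and `v₁u_k`. -/
def mobiusLadder (k : ℕ) : SimpleGraph (Fin k ⊕ Fin k) :=
  SimpleGraph.fromRel (fun a b =>
    (∃ i j : Fin k, (i : ℕ) + 1 = (j : ℕ) ∧
      ((a = Sum.inl i ∧ b = Sum.inl j) ∨ (a = Sum.inr i ∧ b = Sum.inr j))) ∨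
    (∃ i : Fin k, a = Sum.inl i ∧ b = Sum.inr i) ∨
    (∃ i j : Fin k, (i : ℕ) = 0 ∧ (j : ℕ) = k - 1 ∧
      ((a = Sum.inl i ∧ b = Sum.inr j) ∨ (a = Sum.inr i ∧ b = Sum.inl j))))

namespace MLaux

lemma adj_rung {k : ℕ} (i : Fin k) : (mobiusLadder k).Adj (Sum.inl i) (Sum.inr i) := by
  rw [mobiusLadder, fromRel_adj]
  exact ⟨by simp, Or.inl (Or.inr (Or.inl ⟨i, rfl, rfl⟩))⟩

lemma adj_uu {k : ℕ} (i j : Fin k) (h : (i : ℕ) + 1 = (j : ℕ)) :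
    (mobiusLadder k).Adj (Sum.inl i) (Sum.inl j) := by
  rw [mobiusLadder, fromRel_adj]
  refine ⟨by simp; intro he; omega, Or.inl (Or.inl ⟨i, j, h, Or.inl ⟨rfl, rfl⟩⟩)⟩

lemma adj_vv {k : ℕ} (i j : Fin k) (h : (i : ℕ) + 1 = (j : ℕ)) :
    (mobiusLadder k).Adj (Sum.inr i) (Sum.inr j) := by
  rw [mobiusLadder, fromRel_adj]
  refine ⟨by simp; intro he; omega, Or.inl (Or.inl ⟨i, j, h, Or.inr ⟨rfl, rfl⟩⟩)⟩

lemma adj_mob {k : ℕ} (i j : Fin k) (hi : (i : ℕ) = 0) (hj : (j : ℕ) = k - 1) :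
    (mobiusLadder k).Adj (Sum.inr j) (Sum.inl i) := by
  rw [mobiusLadder, fromRel_adj]
  exact ⟨by simp, Or.inr (Or.inr (Or.inr ⟨i, j, hi, hj, Or.inl ⟨rfl, rfl⟩⟩))⟩

def wU (k : ℕ) : (m : ℕ) → (h : m + 1 ≤ k) →
    (mobiusLadder k).Walk (Sum.inl ⟨k - 1 - m, by omega⟩) (Sum.inl ⟨k - 1, by omega⟩)
  | 0, _ => Walk.nil
  | m + 1, h =>
    Walk.cons (adj_uu ⟨k - 1 - (m+1), by omega⟩ ⟨k - 1 - m, by omega⟩ (by simp; omega))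
      (wU k m (by omega))

lemma length_wU (k m : ℕ) (h : m + 1 ≤ k) : (wU k m h).length = m := by
  induction m with
  | zero => rfl
  | succ n ih => simp only [wU, Walk.length_cons, ih (by omega)]

lemma mem_support_wU (k m : ℕ) (h : m + 1 ≤ k) (x : Fin k ⊕ Fin k) :
    x ∈ (wU k m h).support ↔ ∃ j, k - 1 - m ≤ j ∧ ∃ (hj : j < k), x = Sum.inl ⟨j, hj⟩ := by
  induction m with
  | zero =>
    simp only [wU, Walk.support_nil, List.mem_singleton]
    constructor
    · rintro rfl; exact ⟨k - 1, le_refl _, by omega, rfl⟩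
    · rintro ⟨j, hj1, hj2, rfl⟩
      congr 1; exact Fin.ext (by simp; omega)
  | succ n ih =>
    simp only [wU, Walk.support_cons, List.mem_cons, ih (by omega)]
    constructor
    · rintro (rfl | ⟨j, hj1, hj2, rfl⟩)
      · exact ⟨k - 1 - (n+1), le_refl _, by omega, rfl⟩
      · exact ⟨j, by omega, hj2, rfl⟩
    · rintro ⟨j, hj1, hj2, rfl⟩
      rcases Nat.lt_or_ge j (k - 1 - n) with hlt | hge
      · left
        congr 1; exact Fin.ext (by simp; omega)
      · exact Or.inr ⟨j, hge, hj2, rfl⟩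

lemma nodup_support_wU (k m : ℕ) (h : m + 1 ≤ k) : (wU k m h).support.Nodup := by
  induction m with
  | zero => simp [wU]
  | succ n ih =>
    simp only [wU, Walk.support_cons, List.nodup_cons]
    refine ⟨?_, ih (by omega)⟩
    rw [mem_support_wU]
    rintro ⟨j, hj1, hj2, he⟩
    have h2 : (⟨k - 1 - (n+1), by omega⟩ : Fin k) = ⟨j, hj2⟩ := Sum.inl.inj he
    have h3 : k - 1 - (n+1) = j := by
      have := congrArg Fin.val h2; simpa using this
    omega

lemma edges_wU (k m : ℕ) (h : m + 1 ≤ k) :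
    ∀ e ∈ (wU k m h).edges, ∃ a b : Fin k, e = s(Sum.inl a, Sum.inl b) := by
  induction m with
  | zero => simp [wU]
  | succ n ih =>
    simp only [wU, Walk.edges_cons, List.mem_cons]
    rintro e (rfl | he)
    · exact ⟨_, _, rfl⟩
    · exact ih (by omega) e he

/-- middle walk from u2 to u_{k-1} -/
def midW (k : ℕ) (hk : 5 ≤ k) :
    (mobiusLadder k).Walk (Sum.inl ⟨2, by omega⟩) (Sum.inl ⟨k - 1, by omega⟩) :=
  (wU k (k - 3) (by omega)).copy (by congr 1; exact Fin.ext (by simp; omega)) rfl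

/-- walk v0 v1 v2 u2 u3 ... u_{k-1} v_{k-1} u0 -/
def restWalk (k : ℕ) (hk : 5 ≤ k) :
    (mobiusLadder k).Walk (Sum.inr ⟨0, by omega⟩) (Sum.inl ⟨0, by omega⟩) :=
  Walk.cons (adj_vv ⟨0, by omega⟩ ⟨1, by omega⟩ rfl)
  (Walk.cons (adj_vv ⟨1, by omega⟩ ⟨2, by omega⟩ rfl)
  (Walk.cons ((adj_rung ⟨2, by omega⟩).symm)
  ((midW k hk).append
    (Walk.cons (adj_rung ⟨k - 1, by omega⟩)
    (Walk.cons (adj_mob ⟨0, by omega⟩ ⟨k - 1, by omega⟩ rfl rfl) Walk.nil)))))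

def cycW (k : ℕ) (hk : 5 ≤ k) :
    (mobiusLadder k).Walk (Sum.inl ⟨0, by omega⟩) (Sum.inl ⟨0, by omega⟩) :=
  Walk.cons (adj_rung ⟨0, by omega⟩) (restWalk k hk)

lemma mem_support_cycW (k : ℕ) (hk : 5 ≤ k) (x : Fin k ⊕ Fin k) :
    x ∈ (cycW k hk).support ↔
      x = Sum.inl ⟨0, by omega⟩ ∨ x = Sum.inr ⟨0, by omega⟩ ∨ x = Sum.inr ⟨1, by omega⟩ ∨
      x = Sum.inr ⟨2, by omega⟩ ∨ x = Sum.inr ⟨k - 1, by omega⟩ ∨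
      (∃ j, 2 ≤ j ∧ ∃ (hj : j < k), x = Sum.inl ⟨j, hj⟩) := by
  simp only [cycW, restWalk, midW, Walk.support_cons, Walk.support_append,
    Walk.support_copy, Walk.support_nil, List.mem_cons, List.mem_append,
    List.tail_cons, List.mem_singleton, List.mem_nil_iff, or_false, mem_support_wU]
  constructor
  · rintro (rfl | rfl | rfl | rfl | ⟨j, hj1, hj2, rfl⟩ | rfl | rfl)
    · exact Or.inl rfl
    · exact Or.inr (Or.inl rfl)
    · exact Or.inr (Or.inr (Or.inl rfl))
    · exact Or.inr (Or.inr (Or.inr (Or.inl rfl)))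
    · exact Or.inr (Or.inr (Or.inr (Or.inr (Or.inr ⟨j, by omega, hj2, rfl⟩))))
    · exact Or.inr (Or.inr (Or.inr (Or.inr (Or.inl rfl))))
    · exact Or.inl rfl
  · rintro (rfl | rfl | rfl | rfl | rfl | ⟨j, hj1, hj2, rfl⟩)
    · exact Or.inl rfl
    · exact Or.inr (Or.inl rfl)
    · exact Or.inr (Or.inr (Or.inl rfl))
    · exact Or.inr (Or.inr (Or.inr (Or.inl rfl)))
    · exact Or.inr (Or.inr (Or.inr (Or.inr (Or.inr (Or.inl rfl)))))
    · exact Or.inr (Or.inr (Or.inr (Or.inr (Or.inl ⟨j, by omega, hj2, rfl⟩))))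

end MLaux

namespace MLaux

lemma isPath_restWalk (k : ℕ) (hk : 5 ≤ k) : (restWalk k hk).IsPath := by
  apply Walk.IsPath.mk'
  have h3 : k - 3 + 1 ≤ k := by omega
  have hmem : ∀ x, x ∈ (wU k (k-3) h3).support →
      ∃ j, 2 ≤ j ∧ ∃ (hj : j < k), x = Sum.inl ⟨j, hj⟩ := by
    intro x hx
    obtain ⟨j, hj1, hj2, rfl⟩ := (mem_support_wU k (k-3) h3 x).1 hx
    exact ⟨j, by omega, hj2, rfl⟩
  simp only [restWalk, midW, Walk.support_cons, Walk.support_append, Walk.support_copy,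
    Walk.support_nil, List.tail_cons, List.nodup_cons, List.mem_cons, List.mem_append,
    List.mem_singleton, List.mem_nil_iff, or_false]
  refine ⟨?_, ?_, ?_, ?_⟩
  · rintro (h | h | h | h | h)
    · simp at h
    · simp at h
    · obtain ⟨j, hj1, hj2, he⟩ := hmem _ h; simp at he
    · simp at h; omega
    · simp at h
  · rintro (h | h | h | h)
    · simp at h
    · obtain ⟨j, hj1, hj2, he⟩ := hmem _ h; simp at he
    · simp at h; omega
    · simp at h
  · rintro (h | h | h)
    · obtain ⟨j, hj1, hj2, he⟩ := hmem _ h; simp at he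
    · simp at h; omega
    · simp at h
  · rw [List.nodup_append]
    refine ⟨nodup_support_wU k (k-3) h3, by simp, ?_⟩
    intro x hx
    obtain ⟨j, hj1, hj2, rfl⟩ := hmem x hx
    simp only [List.mem_cons, List.mem_singleton, List.mem_nil_iff, or_false]
    rintro b (rfl | rfl) h
    · simp at h
    · simp at h; omega

lemma edge_not_mem (k : ℕ) (hk : 5 ≤ k) :
    s(Sum.inl (⟨0, by omega⟩ : Fin k), Sum.inr (⟨0, by omega⟩ : Fin k)) ∉
      (restWalk k hk).edges := by
  have h3 : k - 3 + 1 ≤ k := by omega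
  simp only [restWalk, midW, Walk.edges_cons, Walk.edges_append, Walk.edges_copy,
    Walk.edges_nil, List.mem_cons, List.mem_append, List.mem_nil_iff, or_false]
  rintro (h | h | h | h | h | h)
  · rw [Sym2.eq_iff] at h
    rcases h with ⟨h1, h2⟩ | ⟨h1, h2⟩ <;> simp_all
  · rw [Sym2.eq_iff] at h
    rcases h with ⟨h1, h2⟩ | ⟨h1, h2⟩ <;> simp_all
  · rw [Sym2.eq_iff] at h
    rcases h with ⟨h1, h2⟩ | ⟨h1, h2⟩ <;> simp_all
  · obtain ⟨a, b, he⟩ := edges_wU k (k-3) h3 _ h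
    rw [Sym2.eq_iff] at he
    rcases he with ⟨h1, h2⟩ | ⟨h1, h2⟩ <;> simp_all
  · rw [Sym2.eq_iff] at h
    rcases h with ⟨h1, h2⟩ | ⟨h1, h2⟩ <;> simp at h1 h2 <;> omega
  · rw [Sym2.eq_iff] at h
    rcases h with ⟨h1, h2⟩ | ⟨h1, h2⟩ <;> simp at h1 h2 <;> omega

lemma length_cycW (k : ℕ) (hk : 5 ≤ k) : (cycW k hk).length = k + 3 := by
  simp only [cycW, restWalk, midW, Walk.length_cons, Walk.length_append, Walk.length_copy,
    Walk.length_nil, length_wU]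
  omega

lemma neighbors_u1 (k : ℕ) (hk : 5 ≤ k) (y : Fin k ⊕ Fin k)
    (h : (mobiusLadder k).Adj (Sum.inl ⟨1, by omega⟩) y) :
    y = Sum.inl ⟨0, by omega⟩ ∨ y = Sum.inl ⟨2, by omega⟩ ∨ y = Sum.inr ⟨1, by omega⟩ := by
  rw [mobiusLadder, fromRel_adj] at h
  obtain ⟨-, h | h⟩ := h
  · rcases h with ⟨i, j, hij, ⟨ha, rfl⟩ | ⟨ha, hb⟩⟩ | ⟨i, ha, rfl⟩ | ⟨i, j, hi, hj, ⟨ha, hb⟩ | ⟨ha, hb⟩⟩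
    · right; left
      have hi1 : (i : ℕ) = 1 := by
        have := Sum.inl.inj ha; simpa using congrArg Fin.val this.symm
      congr 1; exact Fin.ext (by simp; omega)
    · simp at ha
    · right; right
      have hi1 : (i : ℕ) = 1 := by
        have := Sum.inl.inj ha; simpa using congrArg Fin.val this.symm
      congr 1; exact Fin.ext (by simp; omega)
    · have : (1 : ℕ) = 0 := by
        have := Sum.inl.inj ha; have := congrArg Fin.val this; simp at this; omega
      omega
    · simp at ha
  · rcases h with ⟨i, j, hij, ⟨rfl, hb⟩ | ⟨ha, hb⟩⟩ | ⟨i, rfl, hb⟩ | ⟨i, j, hi, hj, ⟨rfl, hb⟩ | ⟨rfl, hb⟩⟩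
    · left
      have hj1 : (j : ℕ) = 1 := by
        have := Sum.inl.inj hb; simpa using congrArg Fin.val this.symm
      congr 1; exact Fin.ext (by simp; omega)
    · simp at hb
    · simp at hb
    · simp at hb
    · have : k - 1 = 1 := by
        have := Sum.inl.inj hb; have := congrArg Fin.val this; simp at this; omega
      omega

end MLaux

open MLaux

/-- For every odd `k ≥ 5`, the Möbius ladder `M_k` is not cycle-conformal:
it contains an even cycle whose deletion leaves no perfect matching. -/
theorem mobiusLadder_odd_not_cycleConformal (k : ℕ) (hk : 5 ≤ k) (hko : Odd k) :
    ∃ (v : Fin k ⊕ Fin k) (c : (mobiusLadder k).Walk v v),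
      c.IsCycle ∧ Even c.length ∧
      ¬ hasPM (delVerts (mobiusLadder k) {x | x ∈ c.support}) := by
  refine ⟨Sum.inl ⟨0, by omega⟩, cycW k hk, ?_, ?_, ?_⟩
  · rw [cycW, Walk.cons_isCycle_iff]
    exact ⟨isPath_restWalk k hk, edge_not_mem k hk⟩
  · rw [length_cycW]
    obtain ⟨t, rfl⟩ := hko
    exact ⟨t + 2, by ring⟩
  · rintro ⟨M, hM⟩
    have hx1 : Sum.inl (⟨1, by omega⟩ : Fin k) ∈
        ({x | x ∈ (cycW k hk).support} : Set (Fin k ⊕ Fin k))ᶜ := by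
      simp only [Set.mem_compl_iff, Set.mem_setOf_eq, mem_support_cycW]
      push_neg
      refine ⟨by simp, by simp, by simp, by simp, by simp, ?_⟩
      intro j hj1 hj2 he
      have := congrArg Fin.val (Sum.inl.inj he)
      simp at this; omega
    obtain ⟨w, hw, -⟩ := hM.1 (hM.2 ⟨_, hx1⟩)
    have hadj : (mobiusLadder k).Adj (Sum.inl ⟨1, by omega⟩) ↑w := M.adj_sub hw
    have hy := neighbors_u1 k hk ↑w hadj
    have hw2 := w.2
    simp only [Set.mem_compl_iff, Set.mem_setOf_eq] at hw2
    apply hw2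
    rw [mem_support_cycW]
    rcases hy with hy | hy | hy <;> rw [hy]
    · exact Or.inl rfl
    · exact Or.inr (Or.inr (Or.inr (Or.inr (Or.inr ⟨2, le_refl _, by omega, rfl⟩))))
    · exact Or.inr (Or.inr (Or.inl rfl))
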